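/- arXiv:1610.05069 — 3 statements merged into one kernel-verified Lean document; each statement's English description precedes it below -/
import Mathlib

section
/- If T is a positive self-adjoint bounded operator on a Hilbert space that is bounded below by a positive constant c > 0, then T^{-1/2} = (2/π) ∫₀^∞ (λ²·I + T)⁻¹ dλ, where the integral converges in the operator norm topology. -/
open MeasureTheory Real

lemma aux_scalar {x : ℝ} (hx : 0 < x) :
    IntegrableOn (fun l : ℝ => (l ^ 2 + x)⁻¹) (Set.Ioi 0) ∧
    ∫ l in Set.Ioi (0 : ℝ), (l ^ 2 + x)⁻¹ = Real.pi / 2 * (Real.sqrt x)⁻¹ := by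
  have hs : 0 < Real.sqrt x := Real.sqrt_pos.mpr hx
  have hsx : Real.sqrt x ^ 2 = x := Real.sq_sqrt hx.le
  have hderiv : ∀ l ∈ Set.Ici (0:ℝ),
      HasDerivAt (fun l : ℝ => (Real.sqrt x)⁻¹ * Real.arctan (l / Real.sqrt x))
        ((l ^ 2 + x)⁻¹) l := by
    intro l _
    have h1 : HasDerivAt (fun l : ℝ => l / Real.sqrt x) (1 / Real.sqrt x) l := by
      simpa using (hasDerivAt_id l).div_const (Real.sqrt x)
    have h2 := (Real.hasDerivAt_arctan (l / Real.sqrt x)).comp l h1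
    have h3 := h2.const_mul (Real.sqrt x)⁻¹
    refine h3.congr_deriv ?_
    have hne : l ^ 2 + x ≠ 0 := by positivity
    field_simp
    nlinarith [hsx]
  have hpos : ∀ l ∈ Set.Ioi (0:ℝ), 0 ≤ (l ^ 2 + x)⁻¹ := fun l _ => by positivity
  have htend : Filter.Tendsto (fun l : ℝ => (Real.sqrt x)⁻¹ * Real.arctan (l / Real.sqrt x))
      Filter.atTop (nhds ((Real.sqrt x)⁻¹ * (Real.pi / 2))) := by
    have h1 : Filter.Tendsto (fun l : ℝ => l / Real.sqrt x) Filter.atTop Filter.atTop :=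
      Filter.tendsto_id.atTop_div_const hs
    exact ((tendsto_nhds_of_tendsto_nhdsWithin Real.tendsto_arctan_atTop).comp h1).const_mul _
  refine ⟨integrableOn_Ioi_deriv_of_nonneg' hderiv hpos htend, ?_⟩
  rw [integral_Ioi_of_hasDerivAt_of_nonneg' hderiv hpos htend]
  simp [Real.arctan_zero]
  ring

set_option maxHeartbeats 1000000 in
/-- If `T` is a positive self-adjoint bounded operator on a complex Hilbert space bounded
below by `c > 0`, then `T^{-1/2} = (2/π) ∫₀^∞ (λ²·I + T)⁻¹ dλ`, the integral converging in norm
(Bochner integrability). -/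
theorem stmt0 {H : Type*} [NormedAddCommGroup H] [InnerProductSpace ℂ H] [CompleteSpace H]
    (T : H →L[ℂ] H) (hT : IsSelfAdjoint T) (c : ℝ) (hc : 0 < c)
    (hbdd : ∀ x : H, c * ‖x‖ ^ 2 ≤ (inner ℂ (T x) x : ℂ).re) :
    IntegrableOn (fun l : ℝ => Ring.inverse (l ^ 2 • (1 : H →L[ℂ] H) + T)) (Set.Ioi 0) ∧
    cfc (fun x : ℝ => (Real.sqrt x)⁻¹) T =
      (2 / Real.pi) • ∫ l in Set.Ioi (0 : ℝ), Ring.inverse (l ^ 2 • (1 : H →L[ℂ] H) + T) := by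
  -- spectrum lower bound
  have hspec : ∀ t ∈ spectrum ℝ T, c ≤ t := by
    rw [← algebraMap_le_iff_le_spectrum (ha := hT)]
    rw [Algebra.algebraMap_eq_smul_one]
    rw [ContinuousLinearMap.le_def]
    refine ⟨(hT.sub (IsSelfAdjoint.smul (star_trivial c) (IsSelfAdjoint.one _))).isSymmetric, fun x => ?_⟩
    rw [ContinuousLinearMap.reApplyInnerSelf]
    have h2 : (inner ℂ ((T - c • (1 : H →L[ℂ] H)) x) x : ℂ).re
        = (inner ℂ (T x) x : ℂ).re - c * ‖x‖ ^ 2 := by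
      simp only [ContinuousLinearMap.sub_apply, ContinuousLinearMap.smul_apply,
        ContinuousLinearMap.one_apply, inner_sub_left,
        RCLike.real_smul_eq_coe_smul (K := ℂ), inner_smul_left, RCLike.conj_ofReal]
      have h4 : ((RCLike.ofReal c : ℂ) * (inner ℂ x x : ℂ)).re = c * (inner ℂ x x : ℂ).re :=
        RCLike.re_ofReal_mul (K := ℂ) c _
      rw [Complex.sub_re, h4]
      have h3 : (inner ℂ x x : ℂ).re = ‖x‖ ^ 2 := by
        simpa using inner_self_eq_norm_sq (𝕜 := ℂ) x
      rw [h3]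
    have := hbdd x
    show (0:ℝ) ≤ (inner ℂ ((T - c • (1 : H →L[ℂ] H)) x) x : ℂ).re
    rw [h2]; linarith
  have hσpos : ∀ x : spectrum ℝ T, (0:ℝ) < (x : ℝ) :=
    fun x => lt_of_lt_of_le hc (hspec x x.2)
  -- the continuous family of resolvent symbols
  let F : C(ℝ × spectrum ℝ T, ℝ) :=
    ⟨fun p => (p.1 ^ 2 + (p.2 : ℝ))⁻¹, by
      refine Continuous.inv₀ ?_ ?_
      · exact (continuous_fst.pow 2).add (continuous_subtype_val.comp continuous_snd)
      · intro p
        have h1 := hσpos p.2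
        have h2 := sq_nonneg p.1
        exact ne_of_gt (by linarith)⟩
  let f : ℝ → C(spectrum ℝ T, ℝ) := fun l => F.curry l
  have hfcont : Continuous f := F.curry.continuous
  let φ : C(spectrum ℝ T, ℝ) →L[ℝ] (H →L[ℂ] H) :=
    { toFun := cfcHom hT (R := ℝ)
      map_add' := map_add _
      map_smul' := map_smul _
      cont := (cfcHom_isClosedEmbedding hT).continuous }
  have hbound : IntegrableOn (fun l : ℝ => (l ^ 2 + c)⁻¹) (Set.Ioi 0) := (aux_scalar hc).1
  have hfint : IntegrableOn f (Set.Ioi 0) := by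
    refine Integrable.mono' hbound hfcont.aestronglyMeasurable.restrict ?_
    filter_upwards with l
    rw [ContinuousMap.norm_le _ (by positivity)]
    intro x
    have hx := hspec x x.2
    show ‖(l ^ 2 + (x : ℝ))⁻¹‖ ≤ (l ^ 2 + c)⁻¹
    rw [Real.norm_eq_abs, abs_of_nonneg (inv_nonneg.mpr (by linarith [sq_nonneg l]))]
    gcongr
  -- identify `Ring.inverse` with `φ (f l)`
  have hcfc : ∀ l : ℝ, cfc (fun x : ℝ => (l ^ 2 + x)⁻¹) T = φ (f l) := by
    intro l
    have hcont : ContinuousOn (fun x : ℝ => (l ^ 2 + x)⁻¹) (spectrum ℝ T) := by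
      refine ContinuousOn.inv₀ (by fun_prop) ?_
      intro x hx
      have h1 := hspec x hx
      have h2 := sq_nonneg l
      exact ne_of_gt (by linarith)
    rw [cfc_apply _ T hT hcont]
    show _ = cfcHom hT (f l)
    congr 1
  have key : ∀ l : ℝ, Ring.inverse (l ^ 2 • (1 : H →L[ℂ] H) + T) = φ (f l) := by
    intro l
    have hcont : ContinuousOn (fun x : ℝ => (l ^ 2 + x)⁻¹) (spectrum ℝ T) := by
      refine ContinuousOn.inv₀ (by fun_prop) ?_
      intro x hx
      have h1 := hspec x hx
      have h2 := sq_nonneg l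
      exact ne_of_gt (by linarith)
    have hne : ∀ x ∈ spectrum ℝ T, l ^ 2 + x ≠ 0 := by
      intro x hx
      have h1 := hspec x hx
      have h2 := sq_nonneg l
      exact ne_of_gt (by linarith)
    have h1 : l ^ 2 • (1 : H →L[ℂ] H) + T = cfc (fun x : ℝ => l ^ 2 + x) T := by
      rw [cfc_const_add (l ^ 2) (fun x : ℝ => x) T (by fun_prop) hT,
        Algebra.algebraMap_eq_smul_one, cfc_id' ℝ T]
    have hmul1 : cfc (fun x : ℝ => l ^ 2 + x) T * cfc (fun x : ℝ => (l ^ 2 + x)⁻¹) T = 1 := by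
      rw [← cfc_mul _ _ T (by fun_prop) hcont]
      rw [show (fun x : ℝ => (l ^ 2 + x) * (l ^ 2 + x)⁻¹) = _ from rfl]
      rw [cfc_congr (g := (1 : ℝ → ℝ)) fun x hx => mul_inv_cancel₀ (hne x hx)]
      exact cfc_one ℝ T
    have hmul2 : cfc (fun x : ℝ => (l ^ 2 + x)⁻¹) T * cfc (fun x : ℝ => l ^ 2 + x) T = 1 := by
      rw [← cfc_mul _ _ T hcont (by fun_prop)]
      rw [cfc_congr (g := (1 : ℝ → ℝ)) fun x hx => inv_mul_cancel₀ (hne x hx)]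
      exact cfc_one ℝ T
    let u : (H →L[ℂ] H)ˣ :=
      { val := l ^ 2 • (1 : H →L[ℂ] H) + T
        inv := cfc (fun x : ℝ => (l ^ 2 + x)⁻¹) T
        val_inv := by rw [h1]; exact hmul1
        inv_val := by rw [h1]; exact hmul2 }
    have : Ring.inverse (u : H →L[ℂ] H) = ↑u⁻¹ := Ring.inverse_unit u
    simpa [u, hcfc l] using this
  have hint : IntegrableOn (fun l : ℝ => Ring.inverse (l ^ 2 • (1 : H →L[ℂ] H) + T))
      (Set.Ioi 0) := by
    have := φ.integrable_comp hfint
    simpa only [← key, IntegrableOn] using this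
  refine ⟨hint, ?_⟩
  have h5 : (∫ l in Set.Ioi (0:ℝ), Ring.inverse (l ^ 2 • (1 : H →L[ℂ] H) + T))
      = φ (∫ l in Set.Ioi (0:ℝ), f l) := by
    rw [← φ.integral_comp_comm hfint]
    exact integral_congr_ae (Filter.Eventually.of_forall fun l => key l)
  rw [h5]
  have hgc : Continuous (fun x : spectrum ℝ T => Real.pi / 2 * (Real.sqrt (x : ℝ))⁻¹) := by
    refine Continuous.mul continuous_const ?_
    refine Continuous.inv₀ (Real.continuous_sqrt.comp continuous_subtype_val) ?_
    intro x
    exact ne_of_gt (Real.sqrt_pos.mpr (hσpos x))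
  have h6 : (∫ l in Set.Ioi (0:ℝ), f l)
      = ⟨fun x : spectrum ℝ T => Real.pi / 2 * (Real.sqrt (x : ℝ))⁻¹, hgc⟩ := by
    ext x
    rw [ContinuousMap.integral_apply hfint]
    exact (aux_scalar (hσpos x)).2
  rw [h6, ← _root_.map_smul φ]
  have hcont' : ContinuousOn (fun x : ℝ => (Real.sqrt x)⁻¹) (spectrum ℝ T) := by
    refine ContinuousOn.inv₀ Real.continuous_sqrt.continuousOn ?_
    intro x hx
    exact ne_of_gt (Real.sqrt_pos.mpr (lt_of_lt_of_le hc (hspec x hx)))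
  rw [cfc_apply _ T hT hcont']
  show cfcHom hT _ = cfcHom hT _
  congr 1
  ext x
  show (Real.sqrt (x:ℝ))⁻¹ = (2 / Real.pi) • (Real.pi / 2 * (Real.sqrt (x : ℝ))⁻¹)
  rw [smul_eq_mul]
  have : Real.pi ≠ 0 := Real.pi_ne_zero
  have hs0 : Real.sqrt (x : ℝ) ≠ 0 := ne_of_gt (Real.sqrt_pos.mpr (hσpos x))
  field_simp
end

section
/- Let H be a Hilbert space and D, D' bounded self-adjoint operators on H with D ≥ I and D' ≥ I, and suppose D − D' is compact. Then for every λ ∈ ℝ the difference (D' + iλ)⁻¹ − (D + iλ)⁻¹ is compact, and moreover (D')^{-1/2} − D^{-1/2} is a compact operator. -/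
open scoped NNReal

section Aux

variable {H : Type*} [NormedAddCommGroup H] [InnerProductSpace ℂ H] [CompleteSpace H]

private lemma cpt_conj {A : H →L[ℂ] H} (hA : IsCompactOperator ⇑A) (B C : H →L[ℂ] H) :
    IsCompactOperator ⇑(B * A * C) := by
  have h2 : IsCompactOperator (⇑B ∘ (⇑A ∘ ⇑C)) :=
    (hA.comp_clm C).continuous_comp B.continuous
  simpa [ContinuousLinearMap.coe_mul, Function.comp_assoc] using h2

private lemma isUnit_aux (D : H →L[ℂ] H)
    (hge : ∀ x : H, ‖x‖ ^ 2 ≤ (inner ℂ (D x) x : ℂ).re) (l : ℝ) :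
    IsUnit (D + (Complex.I * l) • (1 : H →L[ℂ] H)) := by
  apply ContinuousLinearMap.isUnit_of_forall_le_norm_inner_map _ (c := 1) one_pos
  intro x
  have h1 : (inner ℂ ((D + (Complex.I * l) • (1 : H →L[ℂ] H)) x) x : ℂ).re
      = (inner ℂ (D x) x : ℂ).re := by
    simp [ContinuousLinearMap.add_apply, ContinuousLinearMap.smul_apply,
      ContinuousLinearMap.one_apply, inner_add_left, inner_smul_left,
      Complex.mul_re, Complex.mul_im, inner_self_im]
    exact Or.inl (by rw [← Complex.ofReal_pow, Complex.ofReal_im])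
  calc ‖x‖ ^ 2 * (1 : ℝ≥0) = ‖x‖ ^ 2 := by simp
    _ ≤ (inner ℂ (D x) x : ℂ).re := hge x
    _ = (inner ℂ ((D + (Complex.I * l) • (1 : H →L[ℂ] H)) x) x : ℂ).re := h1.symm
    _ ≤ ‖(inner ℂ ((D + (Complex.I * l) • (1 : H →L[ℂ] H)) x) x : ℂ)‖ :=
        Complex.re_le_norm _


private lemma spectrum_subset [Nontrivial H] (D : H →L[ℂ] H)
    (hge : ∀ x : H, ‖x‖ ^ 2 ≤ (inner ℂ (D x) x : ℂ).re) :
    spectrum ℝ D ⊆ Set.Icc 1 ‖D‖ := by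
  intro t ht
  refine ⟨?_, le_trans (le_abs_self t) (spectrum.norm_le_norm_of_mem ht)⟩
  by_contra hlt
  push_neg at hlt
  apply spectrum.notMem_iff.mpr ?_ ht
  have hU : IsUnit (D - t • (1 : H →L[ℂ] H)) := by
    apply ContinuousLinearMap.isUnit_of_forall_le_norm_inner_map _
      (c := Real.toNNReal (1 - t)) (by rw [Real.toNNReal_pos]; linarith)
    intro x
    have h1 : (inner ℂ ((D - t • (1 : H →L[ℂ] H)) x) x : ℂ).re
        = (inner ℂ (D x) x : ℂ).re - t * ‖x‖ ^ 2 := by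
      have hsm : (inner ℂ (t • x) x : ℂ).re = t * ‖x‖ ^ 2 := by
        rw [show t • x = (t : ℂ) • x from (Complex.coe_smul t x).symm, inner_smul_left]
        simp [inner_self_eq_norm_sq_to_K, ← Complex.ofReal_pow, Complex.mul_re]
      simp [ContinuousLinearMap.sub_apply, inner_sub_left, hsm]
      exact Or.inl (by rw [← Complex.ofReal_pow, Complex.ofReal_re])
    calc ‖x‖ ^ 2 * (Real.toNNReal (1 - t) : ℝ)
        = ‖x‖ ^ 2 * (1 - t) := by rw [Real.coe_toNNReal _ (by linarith)]
      _ ≤ (inner ℂ (D x) x : ℂ).re - t * ‖x‖ ^ 2 := by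
          have := hge x; nlinarith [sq_nonneg (‖x‖)]
      _ = (inner ℂ ((D - t • (1 : H →L[ℂ] H)) x) x : ℂ).re := h1.symm
      _ ≤ ‖(inner ℂ ((D - t • (1 : H →L[ℂ] H)) x) x : ℂ)‖ := Complex.re_le_norm _
  have heq : algebraMap ℝ (H →L[ℂ] H) t - D = -(D - t • (1 : H →L[ℂ] H)) := by
    rw [Algebra.algebraMap_eq_smul_one, neg_sub]
  rw [heq]
  exact hU.neg

variable (D D' : H →L[ℂ] H)

private lemma pow_diff_cpt (hcpt : IsCompactOperator ⇑(D - D')) :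
    ∀ n : ℕ, IsCompactOperator ⇑(D' ^ n - D ^ n) := by
  have hcpt' : IsCompactOperator ⇑(D' - D) := by
    have := hcpt.neg
    simpa [ContinuousLinearMap.coe_sub', Pi.neg_def, Pi.sub_def, neg_sub] using this
  intro n
  induction n with
  | zero => simpa using isCompactOperator_zero
  | succ n ih =>
    have key : D' ^ (n + 1) - D ^ (n + 1)
        = D' * (D' ^ n - D ^ n) + (D' - D) * D ^ n := by
      rw [pow_succ', pow_succ']; noncomm_ring
    rw [key]
    have h1 : IsCompactOperator ⇑(D' * (D' ^ n - D ^ n)) := by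
      have := ih.continuous_comp D'.continuous
      exact this
    have h2 : IsCompactOperator ⇑((D' - D) * D ^ n) := by
      have := hcpt'.comp_clm (D ^ n)
      exact this
    exact h1.add h2

private lemma aeval_diff_cpt (hcpt : IsCompactOperator ⇑(D - D')) (p : Polynomial ℝ) :
    IsCompactOperator ⇑(Polynomial.aeval D' p - Polynomial.aeval D p) := by
  induction p using Polynomial.induction_on with
  | C r => simpa using isCompactOperator_zero
  | add p q hp hq =>
    have key : Polynomial.aeval D' (p + q) - Polynomial.aeval D (p + q)
        = (Polynomial.aeval D' p - Polynomial.aeval D p)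
          + (Polynomial.aeval D' q - Polynomial.aeval D q) := by
      simp only [map_add]; abel
    rw [key]
    exact hp.add hq
  | monomial n r _ =>
    have key : Polynomial.aeval D' (Polynomial.C r * Polynomial.X ^ (n + 1))
        - Polynomial.aeval D (Polynomial.C r * Polynomial.X ^ (n + 1))
        = algebraMap ℝ (H →L[ℂ] H) r * (D' ^ (n + 1) - D ^ (n + 1)) := by
      simp [mul_sub]
    rw [key]
    have := (pow_diff_cpt D D' hcpt (n + 1)).continuous_comp
      (algebraMap ℝ (H →L[ℂ] H) r).continuous
    exact this

end Aux

/-- If `D, D'` are bounded self-adjoint operators with `D ≥ I`, `D' ≥ I` and `D − D'` compact,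
then every resolvent difference `(D' + iλ)⁻¹ − (D + iλ)⁻¹` is compact and
`(D')^{-1/2} − D^{-1/2}` is compact. -/
theorem stmt6 {H : Type*} [NormedAddCommGroup H] [InnerProductSpace ℂ H] [CompleteSpace H]
    (D D' : H →L[ℂ] H) (hD : IsSelfAdjoint D) (hD' : IsSelfAdjoint D')
    (hge : ∀ x : H, ‖x‖ ^ 2 ≤ (inner ℂ (D x) x : ℂ).re)
    (hge' : ∀ x : H, ‖x‖ ^ 2 ≤ (inner ℂ (D' x) x : ℂ).re)
    (hcpt : IsCompactOperator ⇑(D - D')) :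
    (∀ l : ℝ, IsCompactOperator
        ⇑(Ring.inverse (D' + (Complex.I * l) • (1 : H →L[ℂ] H)) -
          Ring.inverse (D + (Complex.I * l) • (1 : H →L[ℂ] H)))) ∧
    IsCompactOperator
      ⇑(cfc (fun x : ℝ => (Real.sqrt x)⁻¹) D' - cfc (fun x : ℝ => (Real.sqrt x)⁻¹) D) := by
  constructor
  · intro l
    have hU := isUnit_aux D hge l
    have hU' := isUnit_aux D' hge' l
    set T := D + (Complex.I * l) • (1 : H →L[ℂ] H) with hT
    set T' := D' + (Complex.I * l) • (1 : H →L[ℂ] H) with hT'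
    have hid : Ring.inverse T' - Ring.inverse T
        = Ring.inverse T' * (D - D') * Ring.inverse T := by
      have h1 : T * Ring.inverse T = 1 := Ring.mul_inverse_cancel _ hU
      have h2 : Ring.inverse T' * T' = 1 := Ring.inverse_mul_cancel _ hU'
      have hTT : T - T' = D - D' := by rw [hT, hT']; abel
      calc Ring.inverse T' - Ring.inverse T
          = Ring.inverse T' * (T * Ring.inverse T)
            - (Ring.inverse T' * T') * Ring.inverse T := by rw [h1, h2, mul_one, one_mul]
        _ = Ring.inverse T' * (T - T') * Ring.inverse T := by noncomm_ring
        _ = _ := by rw [hTT]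
    rw [hid]
    exact cpt_conj hcpt _ _
  · rcases subsingleton_or_nontrivial H with hsub | hnt
    · have h0 : (cfc (fun x : ℝ => (Real.sqrt x)⁻¹) D'
          - cfc (fun x : ℝ => (Real.sqrt x)⁻¹) D) = 0 := Subsingleton.elim _ _
      rw [h0]
      simpa using isCompactOperator_zero
    · set M := max ‖D‖ ‖D'‖ with hM
      set f : ℝ → ℝ := fun x => (Real.sqrt x)⁻¹ with hf
      have hsD : spectrum ℝ D ⊆ Set.Icc 1 M :=
        (spectrum_subset D hge).trans (Set.Icc_subset_Icc le_rfl (le_max_left _ _))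
      have hsD' : spectrum ℝ D' ⊆ Set.Icc 1 M :=
        (spectrum_subset D' hge').trans (Set.Icc_subset_Icc le_rfl (le_max_right _ _))
      have hfc : ContinuousOn f (Set.Icc 1 M) := by
        apply ContinuousOn.inv₀ Real.continuous_sqrt.continuousOn
        intro x hx
        exact ne_of_gt (Real.sqrt_pos.mpr (lt_of_lt_of_le one_pos hx.1))
      have hfcD : ContinuousOn f (spectrum ℝ D) := hfc.mono hsD
      have hfcD' : ContinuousOn f (spectrum ℝ D') := hfc.mono hsD'
      have hclosed : IsClosed { A : H →L[ℂ] H | IsCompactOperator ⇑A } :=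
        isClosed_setOf_isCompactOperator
      suffices hmem : (cfc f D' - cfc f D)
          ∈ closure { A : H →L[ℂ] H | IsCompactOperator ⇑A } by
        rw [hclosed.closure_eq] at hmem; exact hmem
      rw [Metric.mem_closure_iff]
      intro ε hε
      obtain ⟨p, hp⟩ : ∃ p : Polynomial ℝ, ∀ x ∈ Set.Icc (1:ℝ) M,
          |f x - p.eval x| < ε / 3 := by
        let g : C(Set.Icc (1:ℝ) M, ℝ) := ⟨(Set.Icc (1:ℝ) M).restrict f, hfc.restrict⟩
        have hg : g ∈ closure ((polynomialFunctions (Set.Icc (1:ℝ) M)) : Set _) := by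
          have := polynomialFunctions_closure_eq_top 1 M
          have : g ∈ (polynomialFunctions (Set.Icc (1:ℝ) M)).topologicalClosure := by
            rw [this]; trivial
          exact this
        rw [Metric.mem_closure_iff] at hg
        obtain ⟨q, hq, hdq⟩ := hg (ε / 3) (by positivity)
        rw [polynomialFunctions_coe] at hq
        obtain ⟨p, rfl⟩ := hq
        refine ⟨p, fun x hx => ?_⟩
        have := ContinuousMap.dist_apply_le_dist (f := g)
          (g := Polynomial.toContinuousMapOnAlgHom _ p) ⟨x, hx⟩
        calc |f x - p.eval x|
            = dist (g ⟨x, hx⟩) ((Polynomial.toContinuousMapOnAlgHom _ p) ⟨x, hx⟩) := by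
              simp [g, Real.dist_eq, Polynomial.toContinuousMapOnAlgHom_apply,
                Polynomial.toContinuousMapOn_apply, Polynomial.toContinuousMap_apply]
              rfl
          _ ≤ dist g (Polynomial.toContinuousMapOnAlgHom _ p) := this
          _ < ε / 3 := hdq
      refine ⟨Polynomial.aeval D' p - Polynomial.aeval D p,
        aeval_diff_cpt D D' hcpt p, ?_⟩
      have key : ∀ (A : H →L[ℂ] H), IsSelfAdjoint A → spectrum ℝ A ⊆ Set.Icc 1 M →
          ‖cfc f A - Polynomial.aeval A p‖ ≤ ε / 3 := by
        intro A hA hsA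
        rw [← cfc_polynomial p A hA,
          ← cfc_sub f p.eval A (hfc.mono hsA) (Polynomial.continuous p).continuousOn]
        apply norm_cfc_le (by positivity)
        intro x hx
        rw [Real.norm_eq_abs]
        exact le_of_lt (hp x (hsA hx))
      have hre : (cfc f D' - cfc f D) - (Polynomial.aeval D' p - Polynomial.aeval D p)
          = (cfc f D' - Polynomial.aeval D' p) - (cfc f D - Polynomial.aeval D p) := by abel
      rw [dist_eq_norm, hre]
      calc ‖(cfc f D' - Polynomial.aeval D' p) - (cfc f D - Polynomial.aeval D p)‖
          ≤ ‖cfc f D' - Polynomial.aeval D' p‖ + ‖cfc f D - Polynomial.aeval D p‖ :=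
            norm_sub_le _ _
        _ ≤ ε / 3 + ε / 3 := add_le_add (key D' hD' hsD') (key D hD hsD)
        _ < ε := by linarith
end

section
/- Let H be a Hilbert space and let P be a rank-one orthogonal projection onto the span of a unit vector v. Let d and δ be bounded operators with d² = 0, δ = d*, and suppose Δ = dδ + δd satisfies Δv = 0 and Δ ≥ I on the orthogonal complement of v (i.e., ⟨Δx,x⟩ ≥ ‖x‖² whenever x ⟂ v). Then P + Δ is a positive invertible operator with P + Δ ≥ I, and setting F = (d + δ)(P + Δ)^{-1/2} one has F = F*, and F² = I − P·(P+Δ)⁻¹ = I − P. -/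
open scoped Polynomial in
lemma commute_cfc_aux {A : Type*} [CStarAlgebra A] (a b : A) (hb : IsSelfAdjoint b)
    (hab : Commute a b) (f : ℝ → ℝ) : Commute a (cfc f b) := by
  by_cases hf : ContinuousOn f (spectrum ℝ b)
  · rw [cfc_apply f b hb hf]
    set Φ : C(spectrum ℝ b, ℝ) →⋆ₐ[ℝ] A := cfcHom hb
    suffices h : ∀ g : C(spectrum ℝ b, ℝ), Commute a (Φ g) from h _
    intro g
    let K : Subalgebra ℝ C(spectrum ℝ b, ℝ) := (Subalgebra.centralizer ℝ {a}).comap Φ.toAlgHom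
    have hKclosed : IsClosed (K : Set C(spectrum ℝ b, ℝ)) := by
      have h1 : IsClosed {x : A | a * x = x * a} :=
        isClosed_eq (continuous_mul_left a) (continuous_mul_right a)
      have : (K : Set C(spectrum ℝ b, ℝ)) = Φ ⁻¹' {x : A | a * x = x * a} := by
        ext g
        simp only [K, SetLike.mem_coe, Subalgebra.mem_comap, Subalgebra.mem_centralizer_iff,
          Set.mem_singleton_iff, Set.mem_preimage, Set.mem_setOf_eq]
        constructor
        · intro h; exact h a rfl
        · rintro h y rfl; exact h
      rw [this]
      exact h1.preimage (cfcHom_continuous hb)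
    have hle : polynomialFunctions (spectrum ℝ b) ≤ K := by
      rw [polynomialFunctions.eq_adjoin_X]
      apply Algebra.adjoin_le
      rintro x rfl
      show Polynomial.toContinuousMapOnAlgHom _ Polynomial.X ∈ K
      have hX : Φ (Polynomial.toContinuousMapOnAlgHom _ Polynomial.X) = b := by
        rw [Polynomial.toContinuousMapOnAlgHom_apply,
          Polynomial.toContinuousMapOn_X_eq_restrict_id, cfcHom_id hb]
      simp only [K, Subalgebra.mem_comap, Subalgebra.mem_centralizer_iff,
        Set.mem_singleton_iff]
      rintro y rfl
      rw [show Φ.toAlgHom _ = b from hX]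
      exact hab
    have htop : K = ⊤ := by
      rw [eq_top_iff, ← polynomialFunctions.topologicalClosure (spectrum ℝ b)]
      exact (Subalgebra.topologicalClosure_minimal hle hKclosed)
    have : g ∈ K := htop ▸ Algebra.mem_top
    rw [Subalgebra.mem_comap, Subalgebra.mem_centralizer_iff] at this
    exact this a rfl
  · simp [cfc_apply_of_not_continuousOn b hf]

open ContinuousLinearMap
open scoped Pointwise

/-- If `P` is the rank-one projection onto a unit vector `v`, `d² = 0`, `δ = d*`, and the
Laplacian `Δ = dδ + δd` kills `v` and is bounded below by `I` on the orthogonal complement of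
`v`, then `P + Δ ≥ I` is invertible and `F = (d + δ)(P + Δ)^{-1/2}` is self-adjoint with
`F² = 1 − P`. -/
theorem stmt12 {H : Type*} [NormedAddCommGroup H] [InnerProductSpace ℂ H] [CompleteSpace H]
    (v : H) (hv : ‖v‖ = 1)
    (P : H →L[ℂ] H) (hP : ∀ x : H, P x = (inner ℂ v x : ℂ) • v)
    (d δ : H →L[ℂ] H) (hd2 : d.comp d = 0) (hδ : δ = ContinuousLinearMap.adjoint d)
    (hΔv : (d.comp δ + δ.comp d) v = 0)
    (hΔge : ∀ x : H, (inner ℂ x v : ℂ) = 0 →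
      ‖x‖ ^ 2 ≤ (inner ℂ ((d.comp δ + δ.comp d) x) x : ℂ).re) :
    (∀ x : H, ‖x‖ ^ 2 ≤ (inner ℂ ((P + d.comp δ + δ.comp d) x) x : ℂ).re) ∧
    IsUnit (P + d.comp δ + δ.comp d) ∧
    IsSelfAdjoint ((d + δ) * cfc (fun s : ℝ => (Real.sqrt s)⁻¹) (P + d.comp δ + δ.comp d)) ∧
    ((d + δ) * cfc (fun s : ℝ => (Real.sqrt s)⁻¹) (P + d.comp δ + δ.comp d)) *
      ((d + δ) * cfc (fun s : ℝ => (Real.sqrt s)⁻¹) (P + d.comp δ + δ.comp d)) = 1 - P := by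
  set Δ : H →L[ℂ] H := d.comp δ + δ.comp d with hΔdef
  have hTeq : P + d.comp δ + δ.comp d = P + Δ := add_assoc _ _ _
  rw [hTeq]
  set T : H →L[ℂ] H := P + Δ with hTdef
  set A : H →L[ℂ] H := d + δ with hAdef
  -- star facts
  have hstard : star d = δ := by rw [star_eq_adjoint, hδ]
  have hstarδ : star δ = d := by rw [star_eq_adjoint, hδ, adjoint_adjoint]
  have hdd : d * d = 0 := hd2
  have hδδ : δ * δ = 0 := by
    have := congrArg star hdd
    rwa [star_mul, hstard, star_zero] at this
  have hΔsa : IsSelfAdjoint Δ := by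
    have : star Δ = Δ := by
      show star (d * δ + δ * d) = d * δ + δ * d
      rw [star_add, star_mul, star_mul, hstard, hstarδ, add_comm]
    exact this
  have hAsa : IsSelfAdjoint A := by
    have : star A = A := by
      show star (d + δ) = d + δ
      rw [star_add, hstard, hstarδ, add_comm]
    exact this
  have hPsa : IsSelfAdjoint P := by
    rw [ContinuousLinearMap.isSelfAdjoint_iff']
    symm
    rw [ContinuousLinearMap.eq_adjoint_iff]
    intro x y
    simp only [hP, inner_smul_left, inner_smul_right]
    rw [inner_conj_symm]
    ring
  have hTsa : IsSelfAdjoint T := (hPsa.add hΔsa)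
  -- v is killed
  have hvv : (inner ℂ v v : ℂ) = 1 := by
    rw [inner_self_eq_norm_sq_to_K, hv]; norm_num
  have hkey : ‖δ v‖ ^ 2 + ‖d v‖ ^ 2 = 0 := by
    have h0 : (inner ℂ (d (δ v)) v : ℂ) + inner ℂ (δ (d v)) v = 0 := by
      have h : (inner ℂ (Δ v) v : ℂ) = 0 := by rw [hΔv, inner_zero_left]
      rwa [hΔdef, ContinuousLinearMap.add_apply, ContinuousLinearMap.comp_apply,
        ContinuousLinearMap.comp_apply, inner_add_left] at h
    have h1 : (inner ℂ (d (δ v)) v : ℂ) = inner ℂ (δ v) (δ v) := by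
      conv_lhs => rw [show d = ContinuousLinearMap.adjoint δ by
        rw [hδ, ContinuousLinearMap.adjoint_adjoint]]
      rw [ContinuousLinearMap.adjoint_inner_left]
    have h2 : (inner ℂ (δ (d v)) v : ℂ) = inner ℂ (d v) (d v) := by
      conv_lhs => rw [hδ]
      rw [ContinuousLinearMap.adjoint_inner_left]
    rw [h1, h2, inner_self_eq_norm_sq_to_K, inner_self_eq_norm_sq_to_K] at h0
    have h5 : ((‖δ v‖ ^ 2 + ‖d v‖ ^ 2 : ℝ) : ℂ) = 0 := by push_cast; exact h0
    exact Complex.ofReal_eq_zero.mp h5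
  have hdv : d v = 0 := by
    have h1 : ‖d v‖ = 0 := by nlinarith [sq_nonneg ‖δ v‖, sq_nonneg ‖d v‖, norm_nonneg (d v)]
    exact norm_eq_zero.mp h1
  have hδv : δ v = 0 := by
    have h1 : ‖δ v‖ = 0 := by nlinarith [sq_nonneg ‖δ v‖, sq_nonneg ‖d v‖, norm_nonneg (δ v)]
    exact norm_eq_zero.mp h1
  have hAv : A v = 0 := by
    show d v + δ v = 0
    rw [hdv, hδv, add_zero]
  -- coercivity
  have hcoerc : ∀ x : H, ‖x‖ ^ 2 ≤ (inner ℂ (T x) x : ℂ).re := by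
    intro x
    set c : ℂ := inner ℂ v x with hc
    set y : H := x - c • v with hy
    have hyv : (inner ℂ y v : ℂ) = 0 := by
      rw [hy, inner_sub_left, inner_smul_left, hvv, mul_one, hc, inner_conj_symm, sub_self]
    have hvy : (inner ℂ v y : ℂ) = 0 := by
      rw [← inner_conj_symm, hyv, map_zero]
    have hxcy : x = c • v + y := by rw [hy]; abel
    have hnorm : ‖x‖ ^ 2 = ‖c‖ ^ 2 + ‖y‖ ^ 2 := by
      have h3 := norm_add_sq (𝕜 := ℂ) (c • v) y
      rw [← hxcy, inner_smul_left, hvy, mul_zero] at h3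
      rw [h3]
      simp [norm_smul, hv]
    have hrecc : (c * (starRingEnd ℂ) c).re = ‖c‖ ^ 2 := by
      rw [Complex.mul_conj, Complex.normSq_eq_norm_sq]
      norm_cast
    have hPxx : (inner ℂ (P x) x : ℂ).re = ‖c‖ ^ 2 := by
      rw [hP x, ← hc, hxcy]
      simp only [inner_add_right, inner_smul_left, inner_smul_right, hvv, hvy, mul_zero,
        add_zero, mul_one]
      exact hrecc
    have hΔyv : (inner ℂ (Δ y) v : ℂ) = 0 := by
      conv_lhs => rw [← hΔsa.adjoint_eq]
      rw [ContinuousLinearMap.adjoint_inner_left, hΔv, inner_zero_right]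
    have hΔxx : (inner ℂ (Δ x) x : ℂ).re = (inner ℂ (Δ y) y : ℂ).re := by
      have hΔx : Δ x = Δ y := by
        nth_rw 1 [hxcy]
        rw [map_add, map_smul, hΔv, smul_zero, zero_add]
      rw [hΔx]
      nth_rw 1 [hxcy]
      rw [inner_add_right, inner_smul_right, hΔyv, mul_zero, zero_add]
    have hTxx : (inner ℂ (T x) x : ℂ).re = (inner ℂ (P x) x : ℂ).re + (inner ℂ (Δ x) x : ℂ).re := by
      rw [hTdef, ContinuousLinearMap.add_apply, inner_add_left, Complex.add_re]
    have hge := hΔge y hyv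
    rw [hTxx, hPxx, hΔxx, hnorm]
    linarith
  -- operator identities
  have hvv : (inner ℂ v v : ℂ) = 1 := by
    rw [inner_self_eq_norm_sq_to_K, hv]; norm_num
  have hPP : P * P = P := by
    ext x
    simp [ContinuousLinearMap.mul_apply, hP, inner_smul_right, hvv, hv]
  have hΔP : Δ * P = 0 := by
    ext x
    simp [ContinuousLinearMap.mul_apply, hP, map_smul, hΔv]
  have hPΔ : P * Δ = 0 := by
    ext x
    have h1 : (inner ℂ v (Δ x) : ℂ) = inner ℂ (Δ v) x := by
      conv_lhs => rw [← hΔsa.adjoint_eq]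
      rw [ContinuousLinearMap.adjoint_inner_right]
    simp [ContinuousLinearMap.mul_apply, hP, h1, hΔv]
  have hAP : A * P = 0 := by
    ext x
    simp [ContinuousLinearMap.mul_apply, hP, map_smul, hAv]
  have hPA : P * A = 0 := by
    ext x
    have h1 : (inner ℂ v (A x) : ℂ) = inner ℂ (A v) x := by
      conv_lhs => rw [← hAsa.adjoint_eq]
      rw [ContinuousLinearMap.adjoint_inner_right]
    simp [ContinuousLinearMap.mul_apply, hP, h1, hAv]
  have hAΔ : A * Δ = Δ * A := by
    show (d + δ) * (d * δ + δ * d) = (d * δ + δ * d) * (d + δ)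
    simp only [mul_add, add_mul, ← mul_assoc]
    rw [hdd, hδδ]
    simp only [mul_assoc]
    rw [hdd, hδδ]
    simp [add_comm]
  have hAT : Commute A T := by
    show A * T = T * A
    have h1 : A * T = A * P + A * Δ := mul_add A P Δ
    have h2 : T * A = P * A + Δ * A := add_mul P Δ A
    rw [h1, h2, hAP, hPA, hAΔ]
  have hPT : P * T = P := by
    have h1 : P * T = P * P + P * Δ := mul_add P P Δ
    rw [h1, hPP, hPΔ, add_zero]
  have hAA : A * A = Δ := by
    show (d + δ) * (d + δ) = d * δ + δ * d
    rw [mul_add, add_mul, add_mul, hdd, hδδ]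
    abel
  -- spectrum
  have h1T : (1 : H →L[ℂ] H) ≤ T := by
    rw [ContinuousLinearMap.le_def]
    refine ⟨(hTsa.sub (IsSelfAdjoint.one (R := H →L[ℂ] H))).isSymmetric, fun x => ?_⟩
    rw [ContinuousLinearMap.reApplyInnerSelf_apply, ContinuousLinearMap.sub_apply,
      ContinuousLinearMap.one_apply, inner_sub_left]
    have h1 := hcoerc x
    have h2 : (inner ℂ x x : ℂ).re = ‖x‖ ^ 2 := by
      rw [inner_self_eq_norm_sq_to_K]; norm_cast
    rw [map_sub]
    simp only [RCLike.re_to_complex]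
    rw [h2]
    linarith
  have hspec : spectrum ℝ T ⊆ Set.Ici 1 := by
    intro s hs
    have hsub : (0 : H →L[ℂ] H) ≤ T - 1 := sub_nonneg.mpr h1T
    have hmem : s - 1 ∈ spectrum ℝ (T - 1) := by
      have h3 : s - 1 ∈ spectrum ℝ T - ({1} : Set ℝ) :=
        Set.sub_mem_sub hs (Set.mem_singleton 1)
      rwa [spectrum.sub_singleton_eq, map_one] at h3
    have h4 := spectrum_nonneg_of_nonneg hsub hmem
    exact Set.mem_Ici.mpr (by linarith)
  have hfc : ContinuousOn (fun s : ℝ => (Real.sqrt s)⁻¹) (spectrum ℝ T) := by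
    refine ContinuousOn.mono ?_ hspec
    intro s hs
    have hpos : (0:ℝ) < Real.sqrt s := Real.sqrt_pos.mpr (lt_of_lt_of_le one_pos hs)
    exact ((Real.continuous_sqrt.continuousAt).inv₀ hpos.ne').continuousWithinAt
  set S : H →L[ℂ] H := cfc (fun s : ℝ => (Real.sqrt s)⁻¹) T with hSdef
  have hSsa : IsSelfAdjoint S := cfc_predicate _ T
  have hTS : T * (S * S) = 1 := by
    have hmulS : S * S = cfc (fun s : ℝ => (Real.sqrt s)⁻¹ * (Real.sqrt s)⁻¹) T :=
      (cfc_mul _ _ T hfc hfc).symm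
    have h1' : cfc (fun x : ℝ => x) T * cfc (fun s : ℝ => (Real.sqrt s)⁻¹ * (Real.sqrt s)⁻¹) T
        = cfc (fun s : ℝ => s * ((Real.sqrt s)⁻¹ * (Real.sqrt s)⁻¹)) T :=
      (cfc_mul _ _ T (continuousOn_id' _) (hfc.mul hfc)).symm
    rw [hmulS]
    nth_rw 1 [← cfc_id' ℝ T hTsa]
    rw [h1']
    have h2 : (spectrum ℝ T).EqOn (fun s : ℝ => s * ((Real.sqrt s)⁻¹ * (Real.sqrt s)⁻¹))
        (fun _ => (1:ℝ)) := by
      intro s hs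
      have h1s : (1:ℝ) ≤ s := hspec hs
      have h0s : (0:ℝ) < s := lt_of_lt_of_le one_pos h1s
      simp only
      rw [← mul_inv, Real.mul_self_sqrt h0s.le, mul_inv_cancel₀ h0s.ne']
    rw [cfc_congr h2, cfc_const 1 T hTsa, map_one]
  have hcommTS : Commute T S := by
    have := cfc_commute_cfc (fun x : ℝ => x) (fun s : ℝ => (Real.sqrt s)⁻¹) T
    rwa [cfc_id' ℝ T hTsa] at this
  have hST : (S * S) * T = 1 := by
    rw [← (hcommTS.mul_right hcommTS).eq]
    exact hTS
  have hUnit : IsUnit T := ⟨⟨T, S * S, hTS, hST⟩, rfl⟩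
  have hAS : Commute A S := commute_cfc_aux A T hTsa hAT _
  have hFsa : IsSelfAdjoint (A * S) := by
    have : star (A * S) = A * S := by
      rw [star_mul, hSsa.star_eq, hAsa.star_eq, hAS.eq]
    exact this
  refine ⟨hcoerc, hUnit, hFsa, ?_⟩
  -- F * F = 1 - P
  have hPSS : P * (S * S) = P := by
    rw [← hPT, mul_assoc, hTS, mul_one, hPT]
  calc (A * S) * (A * S) = (A * A) * (S * S) := by
        rw [mul_assoc, ← mul_assoc S A S, ← hAS.eq, mul_assoc, ← mul_assoc]
      _ = (T - P) * (S * S) := by rw [hAA]; congr 1; rw [hTdef]; abel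
      _ = T * (S * S) - P * (S * S) := by rw [sub_mul]
      _ = 1 - P := by rw [hTS, hPSS]
end
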